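/- Assume the Continuum Hypothesis. Then there exists a maximal almost disjoint family 𝒜 of infinite subsets of ℕ such that every A ∈ 𝒜 is not an IP-set, and for every AP-set B ⊆ ℕ and every finite-to-one function f : B → ℕ there exist an AP-set C ⊆ B and A ∈ 𝒜 with f[C] ⊆ A. -/

import Mathlib

open Set Filter

/-- `A` contains arithmetic progressions of all finite lengths. -/
def IsAPSet (A : Set ℕ) : Prop :=
  ∀ k : ℕ, ∃ a d : ℕ, 0 < d ∧ ∀ i < k, a + i * d ∈ A

/-- The set of finite sums of distinct elements of `B`. -/
def FS (B : Set ℕ) : Set ℕ :=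
  {n | ∃ F : Finset ℕ, F.Nonempty ∧ ↑F ⊆ B ∧ n = ∑ i ∈ F, i}

/-- `S` is an IP-set: it contains `FS B` for some infinite `B`. -/
def IsIPSet (S : Set ℕ) : Prop :=
  ∃ B : Set ℕ, B.Infinite ∧ FS B ⊆ S

/-- `f` is finite-to-one on `C`. -/
def FinToOneOn (f : ℕ → ℕ) (C : Set ℕ) : Prop :=
  ∀ m : ℕ, (C ∩ f ⁻¹' {m}).Finite

/-- The Continuum Hypothesis. -/
def ContinuumHypothesis : Prop := Cardinal.aleph 1 = Cardinal.continuum.{0}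

/- ## Basic lemmas -/

lemma IsAPSet.mono {A B : Set ℕ} (hAB : A ⊆ B) (hA : IsAPSet A) : IsAPSet B := by
  intro k
  obtain ⟨a, d, hd, h⟩ := hA k
  exact ⟨a, d, hd, fun i hi => hAB (h i hi)⟩

lemma IsAPSet.infinite {A : Set ℕ} (hA : IsAPSet A) : A.Infinite := by
  apply Set.infinite_of_forall_exists_gt
  intro n
  obtain ⟨a, d, hd, h⟩ := hA (n + 2)
  refine ⟨a + (n + 1) * d, h (n + 1) (by omega), ?_⟩
  have : n + 1 ≤ (n + 1) * d := Nat.le_mul_of_pos_right _ hd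
  omega

lemma IsAPSet.nonempty {A : Set ℕ} (hA : IsAPSet A) : A.Nonempty := by
  obtain ⟨a, d, hd, h⟩ := hA 1
  exact ⟨a, by simpa using h 0 (by omega)⟩

lemma mem_FS_single {B : Set ℕ} {x : ℕ} (hx : x ∈ B) : x ∈ FS B :=
  ⟨{x}, Finset.singleton_nonempty x, by simpa, by simp⟩

lemma mem_FS_pair {B : Set ℕ} {x y : ℕ} (hx : x ∈ B) (hy : y ∈ B) (hxy : x ≠ y) :
    x + y ∈ FS B := by
  refine ⟨{x, y}, ⟨x, by simp⟩, ?_, ?_⟩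
  · intro z hz
    simp only [Finset.coe_insert, Finset.coe_singleton, Set.mem_insert_iff,
      Set.mem_singleton_iff] at hz
    rcases hz with rfl | rfl <;> assumption
  · rw [Finset.sum_pair hxy]

/- ## Finite van der Waerden (2 colours), via Gallai + compactness -/

open Classical in
lemma vdW_bool (k : ℕ) :
    ∃ W : ℕ, ∀ χ : ℕ → Bool, ∃ a d : ℕ, 0 < d ∧ a + k * d < W ∧
      ∀ i < k, χ (a + i * d) = χ a := by
  rcases Nat.eq_zero_or_pos k with rfl | hk
  · exact ⟨1, fun χ => ⟨0, 1, by omega, by omega, by omega⟩⟩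
  by_contra hW
  push_neg at hW
  choose χs hχs using hW
  set U : Ultrafilter ℕ := Filter.hyperfilter ℕ with hU
  set χ : ℕ → Bool := fun n => if {W | χs W n = true} ∈ U then true else false with hχ
  have hmem : ∀ n, {W | χs W n = χ n} ∈ U := by
    intro n
    by_cases h : {W | χs W n = true} ∈ U
    · have : χ n = true := if_pos h
      rw [this]; exact h
    · have hc : χ n = false := if_neg h
      rw [hc]
      have := (Ultrafilter.compl_mem_iff_notMem (s := {W | χs W n = true})).2 h
      convert this using 1
      ext W
      simp only [Set.mem_setOf_eq, Set.mem_compl_iff]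
      cases (χs W n) <;> simp
  obtain ⟨d, hd, b, c, hc⟩ :=
    Combinatorics.exists_mono_homothetic_copy (M := ℕ) (Finset.range k) χ
  have hbig : {W | ∀ i ∈ Set.Iio k, χs W (d * i + b) = χ (d * i + b)} ∈ U := by
    exact (Filter.eventually_all_finite (Set.finite_Iio k)).2
      (fun i _ => hmem (d * i + b))
  have hcof : {W | b + k * d < W} ∈ U := by
    apply Filter.hyperfilter_le_cofinite
    have hsub : {W | b + k * d < W}ᶜ ⊆ Set.Iic (b + k * d) := by
      intro W hW
      simp only [Set.mem_compl_iff, Set.mem_setOf_eq, not_lt] at hW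
      exact hW
    exact Set.Finite.subset (Set.finite_Iic _) hsub
  obtain ⟨W, hW1, hW2⟩ := Ultrafilter.nonempty_of_mem (Filter.inter_mem hbig hcof)
  obtain ⟨i, hik, hne⟩ := hχs W b d hd hW2
  apply hne
  have h0 : χs W b = c := by
    have h1 := hW1 0 (Set.mem_Iio.2 hk)
    have h2 := hc 0 (Finset.mem_range.2 hk)
    simp only [Nat.mul_zero, Nat.zero_add, smul_eq_mul] at h1 h2
    rw [h1, h2]
  have hi : χs W (b + i * d) = c := by
    have h1 := hW1 i (Set.mem_Iio.2 hik)
    have h2 := hc i (Finset.mem_range.2 hik)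
    rw [smul_eq_mul] at h2
    rw [Nat.mul_comm d i, Nat.add_comm (i * d) b] at h1 h2
    rw [h1, h2]
  rw [hi, h0]

/- ## Partition lemmas for AP-sets -/

lemma apset_partition_two {D X : Set ℕ} (hD : IsAPSet D) :
    IsAPSet (D ∩ X) ∨ IsAPSet (D \ X) := by
  by_contra h
  push_neg at h
  obtain ⟨h1, h2⟩ := h
  simp only [IsAPSet, not_forall, not_exists] at h1 h2
  obtain ⟨k₁, hk₁⟩ := h1
  obtain ⟨k₂, hk₂⟩ := h2
  set k := max k₁ k₂ with hk
  obtain ⟨W, hW⟩ := vdW_bool k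
  obtain ⟨a₀, d₀, hd₀, hAP⟩ := hD W
  classical
  set χ : ℕ → Bool := fun n => decide (a₀ + n * d₀ ∈ X) with hχ
  obtain ⟨a, d, hd, hbound, hmono⟩ := hW χ
  have hin : ∀ i < k, a₀ + (a + i * d) * d₀ ∈ D := by
    intro i hi
    apply hAP
    have h3 : i * d < k * d := (Nat.mul_lt_mul_right hd).2 hi
    omega
  have hform : ∀ i : ℕ, (a₀ + a * d₀) + i * (d * d₀) = a₀ + (a + i * d) * d₀ := by
    intro i; ring
  have hXmem : ∀ i < k, (a₀ + (a + i * d) * d₀ ∈ X ↔ χ a = true) := by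
    intro i hi
    have := hmono i hi
    rw [hχ] at this ⊢
    simp only [decide_eq_decide] at this ⊢
    rw [← this]
    simp
  cases hb : χ a with
  | true =>
    refine hk₁ (a₀ + a * d₀) (d * d₀) ⟨Nat.mul_pos hd hd₀, fun i hi => ?_⟩
    have hik : i < k := lt_of_lt_of_le hi (le_max_left _ _)
    rw [hform i]
    exact ⟨hin i hik, (hXmem i hik).2 hb⟩
  | false =>
    refine hk₂ (a₀ + a * d₀) (d * d₀) ⟨Nat.mul_pos hd hd₀, fun i hi => ?_⟩
    have hik : i < k := lt_of_lt_of_le hi (le_max_right _ _)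
    rw [hform i]
    refine ⟨hin i hik, fun hXi => ?_⟩
    have := (hXmem i hik).1 hXi
    rw [hb] at this
    exact Bool.noConfusion this

lemma apset_partition_finset {ι : Type*} {D : Set ℕ} (hD : IsAPSet D)
    (s : Finset ι) (X : ι → Set ℕ) :
    IsAPSet (D \ ⋃ i ∈ s, X i) ∨ ∃ i ∈ s, IsAPSet (D ∩ X i) := by
  classical
  induction s using Finset.induction_on generalizing D with
  | empty =>
    left
    simpa using hD
  | @insert a s ha ih =>
    rcases apset_partition_two (X := X a) hD with h | h
    · right; exact ⟨a, Finset.mem_insert_self a s, h⟩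
    · rcases ih h with h' | h'
      · left
        apply h'.mono
        intro x hx
        simp only [Set.mem_diff, Set.mem_iUnion] at hx ⊢
        obtain ⟨⟨hxD, hxa⟩, hxs⟩ := hx
        refine ⟨hxD, ?_⟩
        rintro ⟨i, hi, hxi⟩
        rcases Finset.mem_insert.1 hi with rfl | his
        · exact hxa hxi
        · exact hxs ⟨i, his, hxi⟩
      · obtain ⟨i, his, hi⟩ := h'
        right
        refine ⟨i, Finset.mem_insert_of_mem his, hi.mono ?_⟩
        intro x hx
        exact ⟨hx.1.1, hx.2⟩

/- ## The claim: avoiding non-absorbing sets and small values -/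

lemma preimage_finite {B : Set ℕ} {f : ℕ → ℕ} (hf : FinToOneOn f B) (N : ℕ) :
    (B ∩ f ⁻¹' (Set.Iic N)).Finite := by
  have : B ∩ f ⁻¹' (Set.Iic N) ⊆ ⋃ m ∈ Finset.range (N + 1), (B ∩ f ⁻¹' {m}) := by
    intro x hx
    simp only [Set.mem_iUnion]
    exact ⟨f x, by simpa using Nat.lt_succ_of_le hx.2, hx.1, rfl⟩
  exact Set.Finite.subset (Set.Finite.biUnion (Finset.finite_toSet _) (fun m _ => hf m)) this

lemma claim {B : Set ℕ} {f : ℕ → ℕ} (hB : IsAPSet B) (hf : FinToOneOn f B)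
    {g : ℕ → Set ℕ} (hg : ∀ n, ¬ ∃ C, C ⊆ B ∧ IsAPSet C ∧ f '' C ⊆ g n)
    (m N : ℕ) :
    IsAPSet (B ∩ {x | N < f x ∧ ∀ n ≤ m, f x ∉ g n}) := by
  classical
  set X : ℕ → Set ℕ := fun n => if n ≤ m then f ⁻¹' (g n) else f ⁻¹' (Set.Iic N) with hX
  rcases apset_partition_finset hB (Finset.range (m + 2)) X with h | ⟨i, hi, h⟩
  · apply h.mono
    intro x hx
    obtain ⟨hxB, hnot⟩ := hx
    have hnot' : ∀ n, n ∈ Finset.range (m + 2) → x ∉ X n := by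
      intro n hn hmem
      exact hnot (Set.mem_biUnion hn hmem)
    refine ⟨hxB, ?_, ?_⟩
    · by_contra hle
      push_neg at hle
      refine hnot' (m + 1) (Finset.mem_range.2 (by omega)) ?_
      rw [hX]
      simp only [Nat.not_le.2 (Nat.lt_succ_self m), if_false]
      exact hle
    · intro n hn hmem
      refine hnot' n (Finset.mem_range.2 (by omega)) ?_
      rw [hX]
      simp only [if_pos hn]
      exact hmem
  · by_cases him : i ≤ m
    · exact absurd ⟨B ∩ X i, Set.inter_subset_left, h, by
        simp only [hX, if_pos him]
        exact Set.image_subset_iff.2 Set.inter_subset_right⟩ (hg i)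
    · have hXi : X i = f ⁻¹' (Set.Iic N) := by simp [hX, him]
      rw [hXi] at h
      exact absurd (preimage_finite hf N) h.infinite

/- ## Separation lemma -/

lemma separation {D : Set ℕ} (hD : IsAPSet D) (f : ℕ → ℕ) (M : ℕ) :
    ∃ E, E ⊆ D ∧ IsAPSet E ∧ ∀ x ∈ E, ∀ y ∈ E, f x < f y → f x + M < f y := by
  classical
  set X : ℕ → Set ℕ := fun r => {x | f x % (M + 1) = r} with hX
  rcases apset_partition_finset hD (Finset.range (M + 1)) X with h | ⟨r, hr, h⟩
  · exfalso
    obtain ⟨x, hx⟩ := h.nonempty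
    refine hx.2 (Set.mem_biUnion (Finset.mem_range.2 ?_) (?_ : x ∈ X (f x % (M + 1))))
    · exact Nat.mod_lt _ (by omega)
    · rfl
  · refine ⟨D ∩ X r, Set.inter_subset_left, h, ?_⟩
    intro x hx y hy hlt
    have hx' : f x % (M + 1) = r := hx.2
    have hy' : f y % (M + 1) = r := hy.2
    have hmod : f x % (M + 1) = f y % (M + 1) := by rw [hx', hy']
    have hdvd : (M + 1) ∣ (f y - f x) := (Nat.modEq_iff_dvd' (le_of_lt hlt)).1 hmod
    have hpos : 0 < f y - f x := by omega
    have := Nat.le_of_dvd hpos hdvd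
    omega

/- ## The key lemma: building the absorbed AP-subset -/

lemma key {B : Set ℕ} (f : ℕ → ℕ) (g : ℕ → Set ℕ) (hB : IsAPSet B) (hf : FinToOneOn f B)
    (hg : ∀ n, ¬ ∃ C, C ⊆ B ∧ IsAPSet C ∧ f '' C ⊆ g n) :
    ∃ C, C ⊆ B ∧ IsAPSet C ∧ ¬ IsIPSet (f '' C) ∧ (f '' C).Infinite ∧
      ∀ n, ((f '' C) ∩ g n).Finite := by
  classical
  -- step: for every k and M, a block
  have step : ∀ k M : ℕ, ∃ P : Finset ℕ,
      (↑P ⊆ B) ∧ (∃ a d : ℕ, 0 < d ∧ (∀ i < k, a + i * d ∈ P)) ∧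
      (∀ x ∈ P, 2 * M < f x ∧ ∀ n ≤ k, f x ∉ g n) ∧
      (∀ x ∈ P, ∀ y ∈ P, f x < f y → f x + M < f y) := by
    intro k M
    have hcl := claim hB hf hg k (2 * M)
    obtain ⟨E, hED, hE, hsep⟩ := separation hcl f M
    obtain ⟨a, d, hd, hAP⟩ := hE k
    refine ⟨Finset.image (fun i => a + i * d) (Finset.range k), ?_, ⟨a, d, hd, ?_⟩, ?_, ?_⟩
    · intro x hx
      simp only [Finset.coe_image, Set.mem_image, Finset.coe_range, Set.mem_Iio] at hx
      obtain ⟨i, hi, rfl⟩ := hx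
      exact (hED (hAP i hi)).1
    · intro i hi
      exact Finset.mem_image_of_mem _ (Finset.mem_range.2 hi)
    · intro x hx
      simp only [Finset.mem_image, Finset.mem_range] at hx
      obtain ⟨i, hi, rfl⟩ := hx
      exact (hED (hAP i hi)).2
    · intro x hx y hy
      simp only [Finset.mem_image, Finset.mem_range] at hx hy
      obtain ⟨i, hi, rfl⟩ := hx
      obtain ⟨j, hj, rfl⟩ := hy
      exact hsep _ (hAP i hi) _ (hAP j hj)
  choose P hPB hPap hPbig hPsep using step
  -- accumulated unions
  set S : ℕ → Finset ℕ := fun k => Nat.rec ∅ (fun k s => s ∪ P k (s.sup f)) k with hS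
  have hS0 : S 0 = ∅ := rfl
  have hSsucc : ∀ k, S (k + 1) = S k ∪ P k ((S k).sup f) := fun k => rfl
  set Blk : ℕ → Finset ℕ := fun k => P k ((S k).sup f) with hBlk
  set m : ℕ → ℕ := fun k => (S k).sup f with hm
  have hSmono : ∀ j k, j ≤ k → S j ⊆ S k := by
    intro j k hjk
    induction k with
    | zero => simpa [Nat.le_zero.1 hjk] 
    | succ k ih =>
      rcases Nat.lt_or_ge j (k + 1) with h | h
      · rw [hSsucc k]
        exact (ih (by omega)).trans Finset.subset_union_left
      · have : j = k + 1 := by omega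
        subst this; rfl
  have hmmono : ∀ j k, j ≤ k → m j ≤ m k := fun j k hjk => Finset.sup_mono (hSmono j k hjk)
  have hBlkS : ∀ k, (Blk k : Set ℕ) ⊆ S (k + 1) := by
    intro k
    rw [hSsucc k]
    intro x hx
    exact Finset.mem_union_right _ hx
  
  set C : Set ℕ := ⋃ k, (Blk k : Set ℕ) with hC
  have hCB : C ⊆ B := by
    intro x hx
    obtain ⟨k, hk⟩ := Set.mem_iUnion.1 hx
    exact hPB k (m k) hk
  have hCap : IsAPSet C := by
    intro k
    obtain ⟨a, d, hd, hAP⟩ := hPap k (m k)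
    exact ⟨a, d, hd, fun i hi => Set.mem_iUnion.2 ⟨k, hAP i hi⟩⟩
  have hblkmem : ∀ z ∈ f '' C, ∃ k x, x ∈ Blk k ∧ f x = z := by
    intro z hz
    obtain ⟨x, hx, rfl⟩ := hz
    obtain ⟨k, hk⟩ := Set.mem_iUnion.1 hx
    exact ⟨k, x, hk, rfl⟩
  have hfS : ∀ k, ∀ x ∈ S k, f x ≤ m k := fun k x hx => Finset.le_sup hx
  have hfBlk : ∀ k, ∀ x ∈ Blk k, f x ≤ m (k + 1) := by
    intro k x hx
    exact hfS (k + 1) x (hBlkS k hx)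
  have hbig : ∀ k, ∀ x ∈ Blk k, 2 * m k < f x := fun k x hx => (hPbig k (m k) x hx).1
  have havoid : ∀ k, ∀ x ∈ Blk k, ∀ n ≤ k, f x ∉ g n := fun k x hx => (hPbig k (m k) x hx).2
  have hsep2 : ∀ k, ∀ x ∈ Blk k, ∀ y ∈ Blk k, f x < f y → f x + m k < f y :=
    fun k => hPsep k (m k)
  -- levels: if  j < l  then values of Blk j are ≤ m l
  have hlev : ∀ j l, j < l → ∀ x ∈ Blk j, f x ≤ m l := by
    intro j l hjl x hx
    exact le_trans (hfBlk j x hx) (hmmono (j + 1) l (by omega))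
  have hgrow : ∀ k, k ≤ m (k + 1) := by
    intro k
    induction k with
    | zero => omega
    | succ k ih =>
      obtain ⟨a, d, hd, hAP⟩ := hPap (k + 1) (m (k + 1))
      have ha : a ∈ Blk (k + 1) := by
        have := hAP 0 (by omega)
        simpa using this
      have h1 : 2 * m (k + 1) < f a := hbig (k + 1) a ha
      have h2 : f a ≤ m (k + 1 + 1) := hfBlk (k + 1) a ha
      omega
  refine ⟨C, hCB, hCap, ?_, ?_, ?_⟩
  · -- not an IP set
    rintro ⟨B', hB'inf, hFS⟩
    have hB'sub : B' ⊆ f '' C := fun x hx => hFS (mem_FS_single hx)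
    -- pick x₀ in B'
    obtain ⟨x₀, hx₀⟩ := hB'inf.nonempty
    obtain ⟨k₀, u₀, hu₀, hfu₀⟩ := hblkmem x₀ (hB'sub hx₀)
    -- pick y in B' outside the finite set f '' S (k₀ + 1)
    have hfin : (↑((S (k₀ + 1)).image f) : Set ℕ).Finite := Finset.finite_toSet _
    obtain ⟨y, hyB', hy⟩ := hB'inf.exists_notMem_finite hfin
    obtain ⟨l, v, hv, hfv⟩ := hblkmem y (hB'sub hyB')
    have hkl : k₀ < l := by
      by_contra hle
      push_neg at hle
      apply hy
      simp only [Finset.coe_image, Set.mem_image, Finset.mem_coe]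
      exact ⟨v, hSmono (l + 1) (k₀ + 1) (by omega) (hBlkS l hv), hfv⟩
    have hx₀le : x₀ ≤ m l := by
      rw [← hfu₀]; exact hlev k₀ l hkl u₀ hu₀
    have hygt : 2 * m l < y := by rw [← hfv]; exact hbig l v hv
    have hx₀pos : 0 < x₀ := by
      rw [← hfu₀]
      have := hbig k₀ u₀ hu₀
      omega
    have hxy : x₀ < y := by omega
    have hzFS : x₀ + y ∈ FS B' := mem_FS_pair hx₀ hyB' (by omega)
    obtain ⟨p, w, hw, hfw⟩ := hblkmem (x₀ + y) (hFS hzFS)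
    -- p cannot be < l
    have hpl : ¬ p < l := by
      intro hp
      have := hlev p l hp w hw
      omega
    -- p cannot be > l
    have hplt : ¬ l < p := by
      intro hp
      have h1 : 2 * m p < f w := hbig p w hw
      have h2 : y ≤ m p := by
        rw [← hfv]; exact hlev l p hp v hv
      omega
    have hpeq : p = l := by omega
    subst hpeq
    -- now y = f v and x₀ + y = f w are both values on Blk p
    have : f v + m p < f w := hsep2 p v hv w hw (by omega)
    omega
  · -- infinite image
    apply Set.infinite_of_forall_exists_gt
    intro n
    obtain ⟨a, d, hd, hAP⟩ := hPap (n + 1) (m (n + 1))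
    have ha : a ∈ Blk (n + 1) := by simpa using hAP 0 (by omega)
    refine ⟨f a, ⟨a, Set.mem_iUnion.2 ⟨n + 1, ha⟩, rfl⟩, ?_⟩
    have h1 := hbig (n + 1) a ha
    have h2 := hgrow n
    have h3 := hmmono (n + 1) (n + 1) le_rfl
    have := hgrow (n)
    omega
  · -- almost disjoint from every g n
    intro n
    apply Set.Finite.subset (Finset.finite_toSet ((S n).image f))
    rintro z ⟨hz, hzg⟩
    obtain ⟨k, x, hx, rfl⟩ := hblkmem z hz
    have hkn : k < n := by
      by_contra hle
      push_neg at hle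
      exact havoid k x hx n hle hzg
    simp only [Finset.coe_image, Set.mem_image, Finset.mem_coe]
    exact ⟨x, hSmono (k + 1) n (by omega) (hBlkS k hx), rfl⟩

/- ## Every infinite set has an infinite non-IP subset -/

lemma exists_nonIP_subset {D : Set ℕ} (hD : D.Infinite) :
    ∃ L, L ⊆ D ∧ L.Infinite ∧ ¬ IsIPSet L := by
  classical
  have hex : ∀ n : ℕ, ∃ b ∈ D, n < b := hD.exists_gt
  choose b hbD hbgt using hex
  set a : ℕ → ℕ := fun n => Nat.rec (b 0) (fun _ x => b (2 * x)) n with ha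
  have ha0 : a 0 = b 0 := rfl
  have hasucc : ∀ n, a (n + 1) = b (2 * a n) := fun n => rfl
  have haD : ∀ n, a n ∈ D := by
    intro n
    cases n with
    | zero => exact hbD 0
    | succ n => rw [hasucc]; exact hbD _
  have hgrow : ∀ n, 2 * a n < a (n + 1) := by
    intro n; rw [hasucc]; exact hbgt _
  have hpos : ∀ n, 0 < a n := by
    intro n
    induction n with
    | zero => exact hbgt 0
    | succ n ih => have := hgrow n; omega
  have hmono : StrictMono a := strictMono_nat_of_lt_succ (fun n => by have := hgrow n; have := hpos n; omega)
  have hdouble : ∀ i j, i < j → 2 * a i < a j := by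
    intro i j hij
    calc 2 * a i < a (i + 1) := hgrow i
    _ ≤ a j := hmono.monotone (by omega : i + 1 ≤ j)
  refine ⟨Set.range a, ?_, Set.infinite_range_of_injective hmono.injective, ?_⟩
  · rintro x ⟨n, rfl⟩; exact haD n
  · rintro ⟨B', hB'inf, hFS⟩
    have hB'sub : B' ⊆ Set.range a := fun x hx => hFS (mem_FS_single hx)
    obtain ⟨x, hx⟩ := hB'inf.nonempty
    obtain ⟨y, hyB', hyx⟩ := hB'inf.exists_gt x
    obtain ⟨i, hi⟩ := hB'sub hx
    obtain ⟨j, hj⟩ := hB'sub hyB'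
    have hij : i < j := by
      by_contra hle
      push_neg at hle
      have := hmono.monotone hle
      omega
    have hz : x + y ∈ Set.range a := hFS (mem_FS_pair hx hyB' (by omega))
    obtain ⟨p, hp⟩ := hz
    have hjp : j < p := by
      by_contra hle
      push_neg at hle
      have h1 : a p ≤ a j := hmono.monotone hle
      have h2 : 0 < x := by rw [← hi]; exact hpos i
      omega
    have := hdouble j p hjp
    omega

/- ## The transfinite construction -/

abbrev MadIdx : Type := (Cardinal.aleph 1).ord.ToType

abbrev MadTask : Type := Set ℕ ⊕ Set ℕ × (ℕ → ℕ)

open Classical in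
noncomputable def madStep (e : MadIdx → MadTask) (i : MadIdx)
    (rec : ∀ j, j < i → Option (Set ℕ)) : Option (Set ℕ) :=
  Sum.casesOn (e i)
    (fun D =>
      if h : D.Infinite ∧ ∀ j (hj : j < i) (S : Set ℕ), rec j hj = some S → (D ∩ S).Finite then
        some (exists_nonIP_subset h.1).choose
      else none)
    (fun p =>
      if h : IsAPSet p.1 ∧ FinToOneOn p.2 p.1 ∧
          ∃ g : ℕ → Set ℕ, (∀ n, ¬ ∃ C, C ⊆ p.1 ∧ IsAPSet C ∧ p.2 '' C ⊆ g n) ∧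
            ∀ j (hj : j < i) (S : Set ℕ), rec j hj = some S → ∃ n, g n = S then
        some (p.2 '' (key p.2 h.2.2.choose h.1 h.2.1 h.2.2.choose_spec.1).choose)
      else none)

noncomputable def madSeq (e : MadIdx → MadTask) : MadIdx → Option (Set ℕ) :=
  WellFounded.fix (IsWellFounded.wf (α := MadIdx) (r := (· < ·))) (madStep e)

lemma madSeq_eq (e : MadIdx → MadTask) (i : MadIdx) :
    madSeq e i = madStep e i (fun j _ => madSeq e j) :=
  WellFounded.fix_eq _ _ _

lemma madStep_some {e : MadIdx → MadTask} {i : MadIdx}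
    {rec : ∀ j, j < i → Option (Set ℕ)} {S : Set ℕ}
    (h : madStep e i rec = some S) :
    S.Infinite ∧ ¬ IsIPSet S ∧
      ∀ j (hj : j < i) (T : Set ℕ), rec j hj = some T → (S ∩ T).Finite := by
  unfold madStep at h
  rcases hei : e i with D | p
  · rw [hei] at h
    dsimp only at h
    split_ifs at h with hc
    · obtain ⟨hsub, hinf, hip⟩ := (exists_nonIP_subset hc.1).choose_spec
      have hS : (exists_nonIP_subset hc.1).choose = S := Option.some_inj.1 h
      rw [hS] at hsub hinf hip
      refine ⟨hinf, hip, fun j hj T hT => ?_⟩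
      exact Set.Finite.subset (hc.2 j hj T hT) (Set.inter_subset_inter_left _ hsub)
  · rw [hei] at h
    dsimp only at h
    split_ifs at h with hc
    · obtain ⟨hCB, hCap, hnip, hinf, hfin⟩ :=
        (key p.2 hc.2.2.choose hc.1 hc.2.1 hc.2.2.choose_spec.1).choose_spec
      have hS : p.2 '' (key p.2 hc.2.2.choose hc.1 hc.2.1 hc.2.2.choose_spec.1).choose = S :=
        Option.some_inj.1 h
      rw [hS] at hnip hinf hfin
      refine ⟨hinf, hnip, fun j hj T hT => ?_⟩
      obtain ⟨n, hn⟩ := hc.2.2.choose_spec.2 j hj T hT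
      rw [← hn]
      exact hfin n

/-- Lemma 2: under CH there is a MAD family of non-IP sets absorbing images of
finite-to-one functions on AP-sets. -/
theorem exists_special_mad_family (ch : ContinuumHypothesis) :
    ∃ 𝒜 : Set (Set ℕ),
      (∀ A ∈ 𝒜, A.Infinite) ∧
      (∀ A ∈ 𝒜, ∀ B ∈ 𝒜, A ≠ B → (A ∩ B).Finite) ∧
      (∀ D : Set ℕ, D.Infinite → ∃ A ∈ 𝒜, (D ∩ A).Infinite) ∧
      (∀ A ∈ 𝒜, ¬ IsIPSet A) ∧
      (∀ (B : Set ℕ) (f : ℕ → ℕ), IsAPSet B → FinToOneOn f B →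
        ∃ C : Set ℕ, C ⊆ B ∧ IsAPSet C ∧ ∃ A ∈ 𝒜, f '' C ⊆ A) := by
  classical
  have hcard : Cardinal.mk MadTask = Cardinal.mk MadIdx := by
    have h1 : Cardinal.mk MadIdx = Cardinal.aleph 1 := Cardinal.mk_ord_toType _
    have h2 : Cardinal.mk MadTask = Cardinal.continuum := by
      simp [MadTask, Cardinal.mk_sum, Cardinal.mk_set, Cardinal.mk_prod, Cardinal.mk_arrow]
    rw [h1, h2, ch]
  obtain ⟨E⟩ := Cardinal.eq.1 hcard
  set e : MadIdx → MadTask := fun i => E.symm i with he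
  set A : MadIdx → Option (Set ℕ) := madSeq e with hA
  have hfix : ∀ i, A i = madStep e i (fun j _ => A j) := fun i => madSeq_eq e i
  set 𝒜 : Set (Set ℕ) := {S | ∃ i, A i = some S} with h𝒜
  have hinv : ∀ i S, A i = some S → S.Infinite ∧ ¬ IsIPSet S ∧
      ∀ j, j < i → ∀ T, A j = some T → (S ∩ T).Finite := by
    intro i S hS
    rw [hfix i] at hS
    have h := madStep_some hS
    exact ⟨h.1, h.2.1, fun j hj T hT => h.2.2 j hj T hT⟩
  refine ⟨𝒜, ?_, ?_, ?_, ?_, ?_⟩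
  · rintro S ⟨i, hi⟩
    exact (hinv i S hi).1
  · rintro S ⟨i, hi⟩ T ⟨i', hi'⟩ hne
    rcases lt_trichotomy i i' with h | h | h
    · rw [Set.inter_comm]
      exact (hinv i' T hi').2.2 i h S hi
    · subst h
      rw [hi] at hi'
      exact absurd (Option.some_inj.1 hi') hne
    · exact (hinv i S hi).2.2 i' h T hi'
  · -- maximality
    intro D hD
    set i := E (Sum.inl D) with hi
    have hei : e i = Sum.inl D := E.symm_apply_apply _
    have h := hfix i
    unfold madStep at h
    rw [hei] at h
    dsimp only at h
    split_ifs at h with hc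
    · obtain ⟨hsub, hinf, _⟩ := (exists_nonIP_subset hc.1).choose_spec
      refine ⟨_, ⟨i, h⟩, ?_⟩
      exact hinf.mono (Set.subset_inter hsub Set.Subset.rfl)
    · push_neg at hc
      obtain ⟨j, hj, S, hS, hfin⟩ := hc hD
      exact ⟨S, ⟨j, hS⟩, hfin⟩
  · rintro S ⟨i, hi⟩
    exact (hinv i S hi).2.1
  · -- absorption
    intro B f hB hf
    set i := E (Sum.inr (B, f)) with hi
    have hei : e i = Sum.inr (B, f) := E.symm_apply_apply _
    by_cases habs : ∃ j, j < i ∧ ∃ S, A j = some S ∧ ∃ C, C ⊆ B ∧ IsAPSet C ∧ f '' C ⊆ S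
    · obtain ⟨j, hj, S, hS, C, hCB, hCap, hsub⟩ := habs
      exact ⟨C, hCB, hCap, S, ⟨j, hS⟩, hsub⟩
    · -- build the enumeration g of earlier sets
      have hcnt : (insert (∅ : Set ℕ) ((fun j => (A j).getD ∅) '' (Set.Iio i))).Countable := by
        apply Set.Countable.insert
        apply Set.Countable.image
        exact (Cardinal.countable_iff_lt_aleph_one _).2 (Cardinal.mk_Iio_ord_toType i)
      obtain ⟨g, hg⟩ := hcnt.exists_eq_range ⟨∅, Set.mem_insert _ _⟩
      have hgmem : ∀ n, g n ∈ insert (∅ : Set ℕ) ((fun j => (A j).getD ∅) '' (Set.Iio i)) := by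
        intro n; rw [hg]; exact ⟨n, rfl⟩
      have hg1 : ∀ n, ¬ ∃ C, C ⊆ B ∧ IsAPSet C ∧ f '' C ⊆ g n := by
        intro n
        have hempty : ¬ ∃ C, C ⊆ B ∧ IsAPSet C ∧ f '' C ⊆ (∅ : Set ℕ) := by
          rintro ⟨C, hCB, hCap, hsub⟩
          obtain ⟨x, hx⟩ := hCap.nonempty
          exact hsub ⟨x, hx, rfl⟩
        rcases hgmem n with hn | ⟨j, hj, hjn⟩
        · rw [hn]; exact hempty
        · simp only at hjn
          rw [← hjn]
          rcases hAj : A j with _ | S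
          · simpa using hempty
          · simp only [Option.getD_some]
            rintro ⟨C, hCB, hCap, hsub⟩
            exact habs ⟨j, hj, S, hAj, C, hCB, hCap, hsub⟩
      have hg2 : ∀ j, j < i → ∀ S : Set ℕ, A j = some S → ∃ n, g n = S := by
        intro j hj S hS
        have : S ∈ insert (∅ : Set ℕ) ((fun j => (A j).getD ∅) '' (Set.Iio i)) :=
          Set.mem_insert_of_mem _ ⟨j, hj, by show (A j).getD ∅ = S; rw [hS]; rfl⟩
        rw [hg] at this
        exact this
      -- now the step condition holds
      have h := hfix i
      unfold madStep at h
      rw [hei] at h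
      dsimp only at h
      split_ifs at h with hc
      · obtain ⟨hCB, hCap, _, _, _⟩ :=
          (key (B, f).2 hc.2.2.choose hc.1 hc.2.1 hc.2.2.choose_spec.1).choose_spec
        exact ⟨_, hCB, hCap, _, ⟨i, h⟩, Set.Subset.rfl⟩
      · exact absurd ⟨hB, hf, g, hg1, hg2⟩ hc
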